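/- Let X be a GT space and let (x_n)_{n∈ℕ} together with (x_n*)_{n∈ℕ} be a quasi-greedy basis of X. Then the basis is democratic, and there exist constants 0<c≤C<∞ such that c·m ≤ φ_l(m) and φ_u(m) ≤ C·m for every m ≥ 1. -/

import Mathlib

open scoped BigOperators ENNReal

/-- `X` is a GT space: every bounded operator into `ℓ_2` is absolutely summing,
with the absolutely summing norm controlled by `D·‖T‖`. -/
def IsGTSpace (X : Type*) [NormedAddCommGroup X] [NormedSpace ℝ X] : Prop :=
  ∃ D : ℝ, ∀ T : X →L[ℝ] lp (fun _ : ℕ => ℝ) 2, ∀ (B : Finset ℕ) (f : ℕ → X),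
    ∃ ε : ℕ → ℝ, (∀ k, ε k = 1 ∨ ε k = -1) ∧
      ∑ k ∈ B, ‖T (f k)‖ ≤ D * ‖T‖ * ‖∑ k ∈ B, ε k • f k‖

/-- `A` is a greedy set for the coefficient sequence `coef`. -/
def GreedySet (coef : ℕ → ℝ) (A : Finset ℕ) : Prop :=
  ∀ n ∈ A, ∀ k ∉ A, |coef k| ≤ |coef n|

/-- `(x_n)` together with bounded linear functionals `(x_n^*)` is a
(semi-normalized, fundamental, M-bounded Markushevich) basis of `X`. -/
structure IsXBasis {X : Type*} [NormedAddCommGroup X] [NormedSpace ℝ X]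
    (x : ℕ → X) (xs : ℕ → X →L[ℝ] ℝ) : Prop where
  biorth : ∀ m n, xs m (x n) = if m = n then (1 : ℝ) else 0
  dense : ∀ f : X, ∀ ε > 0, ∃ (A : Finset ℕ) (c : ℕ → ℝ), ‖f - ∑ n ∈ A, c n • x n‖ < ε
  norm_lb : ∃ c > 0, ∀ n, c ≤ ‖x n‖
  norm_ub : ∃ C : ℝ, ∀ n, ‖x n‖ ≤ C
  dual_ub : ∃ b : ℝ, ∀ n, ‖xs n‖ ≤ b

/-- The sign function, with the convention `sgn 0 = 1`. -/
noncomputable def sgn (a : ℝ) : ℝ := if a = 0 then 1 else a / |a|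

/-- The basis has the bounded restricted truncation operator property:
`‖U(f,A)‖ ≤ C₀·‖f‖` for every greedy set `A` of `f`, where
`U(f,A) = (min_{n∈A} |x_n^*(f)|)·∑_{n∈A} sgn(x_n^*(f))·x_n`. -/
def BRTP {X : Type*} [NormedAddCommGroup X] [NormedSpace ℝ X]
    (x : ℕ → X) (xs : ℕ → X →L[ℝ] ℝ) : Prop :=
  ∃ C₀ ≥ (1 : ℝ), ∀ (f : X) (A : Finset ℕ) (h : A.Nonempty),
    GreedySet (fun n => xs n f) A →
    ‖(A.inf' h fun n => |xs n f|) • ∑ n ∈ A, sgn (xs n f) • x n‖ ≤ C₀ * ‖f‖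

/-- The basis is quasi-greedy: greedy projections are uniformly bounded. -/
def QuasiGreedyX {X : Type*} [NormedAddCommGroup X] [NormedSpace ℝ X]
    (x : ℕ → X) (xs : ℕ → X →L[ℝ] ℝ) : Prop :=
  ∃ C₀ ≥ (1 : ℝ), ∀ (f : X) (A : Finset ℕ), GreedySet (fun n => xs n f) A →
    ‖∑ n ∈ A, xs n f • x n‖ ≤ C₀ * ‖f‖

lemma sgn_pm (a : ℝ) : sgn a = 1 ∨ sgn a = -1 := by
  unfold sgn
  rcases lt_trichotomy a 0 with h | h | h
  · right; rw [if_neg h.ne, abs_of_neg h, div_neg, div_self h.ne]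
  · left; simp [h]
  · left; rw [if_neg h.ne', abs_of_pos h, div_self h.ne']

lemma abs_sgn (a : ℝ) : |sgn a| = 1 := by
  rcases sgn_pm a with h | h <;> simp [h]

lemma div_abs_mul (t a : ℝ) (ha : a ≠ 0) : (t / |a|) * a = t * sgn a := by
  unfold sgn
  rw [if_neg ha]
  field_simp

section Aux

variable {X : Type*} [NormedAddCommGroup X] [NormedSpace ℝ X]
variable (x : ℕ → X) (xs : ℕ → X →L[ℝ] ℝ)

lemma coef_eq (hb : ∀ m n, xs m (x n) = if m = n then (1:ℝ) else 0)
    (c : ℕ → ℝ) (A : Finset ℕ) (k : ℕ) :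
    xs k (∑ n ∈ A, c n • x n) = if k ∈ A then c k else 0 := by
  rw [map_sum]
  have : ∀ n ∈ A, xs k (c n • x n) = if k = n then c n else 0 := by
    intro n _
    rw [ContinuousLinearMap.map_smul, smul_eq_mul, hb k n]
    split <;> simp
  rw [Finset.sum_congr rfl this, Finset.sum_ite_eq A k c]

lemma abel_sum (C₀ : ℝ) (hC₀ : 1 ≤ C₀)
    (hq : ∀ (f : X) (A : Finset ℕ), GreedySet (fun n => xs n f) A →
      ‖∑ n ∈ A, xs n f • x n‖ ≤ C₀ * ‖f‖) :
    ∀ (m : ℕ) (B C : Finset ℕ) (f : X) (b : ℕ → ℝ) (S : ℝ), B.card = m → Disjoint B C →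
      GreedySet (fun n => xs n f) (B ∪ C) →
      (∀ n ∈ C, ∀ k ∈ B, |xs k f| ≤ |xs n f|) →
      (∀ n ∈ B, 0 ≤ b n) → (∀ n ∈ B, b n ≤ S) → 0 ≤ S →
      (∀ n ∈ B, ∀ k ∈ B, |xs n f| ≤ |xs k f| → b k ≤ b n) →
      ‖∑ n ∈ B, b n • (xs n f • x n)‖ ≤ 2 * C₀ * S * ‖f‖ := by
  intro m
  induction m with
  | zero =>
    intro B C f b S hcard _ _ _ _ _ hS _
    have hB : B = ∅ := Finset.card_eq_zero.mp hcard
    subst hB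
    simp only [Finset.sum_empty, norm_zero]
    have h1 : (0:ℝ) ≤ ‖f‖ := norm_nonneg f
    have h2 : (0:ℝ) ≤ 2 * C₀ := by linarith
    exact mul_nonneg (mul_nonneg h2 hS) h1
  | succ m ih =>
    intro B C f b S hcard hdis hgr habove hb0 hbS hS hanti
    have hne : B.Nonempty := Finset.card_pos.mp (by omega)
    obtain ⟨n₁, hn₁B, hn₁max⟩ := Finset.exists_max_image B (fun n => |xs n f|) hne
    have hgrC : GreedySet (fun n => xs n f) C := by
      intro n hn k hk
      by_cases hkB : k ∈ B
      · exact habove n hn k hkB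
      · exact hgr n (Finset.mem_union_right _ hn) k (by simp [Finset.mem_union, hk, hkB])
    have hsplit : ∑ n ∈ B, b n • (xs n f • x n)
        = b n₁ • ∑ n ∈ B, xs n f • x n
          + ∑ n ∈ B.erase n₁, (b n - b n₁) • (xs n f • x n) := by
      rw [Finset.smul_sum, Finset.sum_erase _ (by simp), ← Finset.sum_add_distrib]
      refine Finset.sum_congr rfl fun n hn => ?_
      rw [← add_smul]
      ring_nf
    have h1 : ‖∑ n ∈ B, xs n f • x n‖ ≤ 2 * C₀ * ‖f‖ := by
      have hBsum : ∑ n ∈ B, xs n f • x n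
          = (∑ n ∈ B ∪ C, xs n f • x n) - ∑ n ∈ C, xs n f • x n := by
        rw [Finset.sum_union hdis]; abel
      rw [hBsum]
      refine (norm_sub_le _ _).trans ?_
      have ha := hq f (B ∪ C) hgr
      have hb := hq f C hgrC
      linarith
    have hcard' : (B.erase n₁).card = m := by
      rw [Finset.card_erase_of_mem hn₁B, hcard]
      omega
    have hdis' : Disjoint (B.erase n₁) (insert n₁ C) := by
      rw [Finset.disjoint_insert_right]
      exact ⟨Finset.notMem_erase _ _,
        Finset.disjoint_of_subset_left (Finset.erase_subset _ _) hdis⟩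
    have hun : B.erase n₁ ∪ insert n₁ C = B ∪ C := by
      ext k
      by_cases hk : k = n₁ <;>
        simp [Finset.mem_union, Finset.mem_erase, Finset.mem_insert, hk, hn₁B]
    have hgr' : GreedySet (fun n => xs n f) (B.erase n₁ ∪ insert n₁ C) := by
      rw [hun]; exact hgr
    have habove' : ∀ n ∈ insert n₁ C, ∀ k ∈ B.erase n₁, |xs k f| ≤ |xs n f| := by
      intro n hn k hk
      have hkB := Finset.mem_of_mem_erase hk
      rcases Finset.mem_insert.mp hn with rfl | hn'
      · exact hn₁max k hkB
      · exact habove n hn' k hkB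
    have hbmin : ∀ n ∈ B, b n₁ ≤ b n := by
      intro n hn
      exact hanti n hn n₁ hn₁B (hn₁max n hn)
    have hIH := ih (B.erase n₁) (insert n₁ C) f (fun n => b n - b n₁) (S - b n₁)
      hcard' hdis' hgr' habove'
      (fun n hn => sub_nonneg.mpr (hbmin n (Finset.mem_of_mem_erase hn)))
      (fun n hn => sub_le_sub_right (hbS n (Finset.mem_of_mem_erase hn)) _)
      (sub_nonneg.mpr (hbS n₁ hn₁B))
      (fun n hn k hk hle => sub_le_sub_right
        (hanti n (Finset.mem_of_mem_erase hn) k (Finset.mem_of_mem_erase hk) hle) _)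
    rw [hsplit]
    have hn₁0 := hb0 n₁ hn₁B
    have h2 : ‖b n₁ • ∑ n ∈ B, xs n f • x n‖ ≤ b n₁ * (2 * C₀ * ‖f‖) := by
      rw [norm_smul, Real.norm_eq_abs, abs_of_nonneg hn₁0]
      exact mul_le_mul_of_nonneg_left h1 hn₁0
    calc ‖b n₁ • ∑ n ∈ B, xs n f • x n
          + ∑ n ∈ B.erase n₁, (b n - b n₁) • (xs n f • x n)‖
        ≤ ‖b n₁ • ∑ n ∈ B, xs n f • x n‖
          + ‖∑ n ∈ B.erase n₁, (b n - b n₁) • (xs n f • x n)‖ := norm_add_le _ _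
      _ ≤ b n₁ * (2 * C₀ * ‖f‖) + 2 * C₀ * (S - b n₁) * ‖f‖ := add_le_add h2 hIH
      _ = 2 * C₀ * S * ‖f‖ := by ring

/-- Key truncation inequality: if `B` is a greedy set of `f` and all coefficients on `B`
have modulus at least `t ≥ 0`, then `t·‖∑_{n∈B} x_n‖ ≤ 4C₀²‖f‖`. -/
lemma key_ineq (hb : ∀ m n, xs m (x n) = if m = n then (1:ℝ) else 0)
    (C₀ : ℝ) (hC₀ : 1 ≤ C₀)
    (hq : ∀ (f : X) (A : Finset ℕ), GreedySet (fun n => xs n f) A →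
      ‖∑ n ∈ A, xs n f • x n‖ ≤ C₀ * ‖f‖)
    (f : X) (B : Finset ℕ) (t : ℝ) (ht : 0 ≤ t)
    (htle : ∀ n ∈ B, t ≤ |xs n f|)
    (hgr : GreedySet (fun n => xs n f) B) :
    t * ‖∑ n ∈ B, x n‖ ≤ 4 * C₀^2 * ‖f‖ := by
  rcases eq_or_lt_of_le ht with rfl | htpos
  · have h1 : (0:ℝ) ≤ ‖f‖ := norm_nonneg f
    have h2 : (0:ℝ) ≤ 4 * C₀^2 := by positivity
    simpa using mul_nonneg h2 h1
  -- all coefficients on B are nonzero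
  have hne0 : ∀ n ∈ B, xs n f ≠ 0 := by
    intro n hn h0
    have := htle n hn
    rw [h0, abs_zero] at this
    linarith
  -- Step 1: the truncated sum is bounded
  have hstep1 : ‖∑ n ∈ B, (t * sgn (xs n f)) • x n‖ ≤ 2 * C₀ * ‖f‖ := by
    have habel := abel_sum x xs C₀ hC₀ hq B.card B ∅ f (fun n => t / |xs n f|) 1 rfl
      (Finset.disjoint_empty_right B) (by simpa using hgr)
      (by simp)
      (fun n hn => div_nonneg ht (abs_nonneg _))
      (fun n hn => by
        rw [div_le_one (lt_of_lt_of_le htpos (htle n hn))]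
        exact htle n hn)
      zero_le_one
      (fun n hn k hk hle => by
        apply div_le_div_of_nonneg_left ht (lt_of_lt_of_le htpos (htle n hn)) hle)
    have heq : ∀ n ∈ B, (t / |xs n f|) • (xs n f • x n) = (t * sgn (xs n f)) • x n := by
      intro n hn
      rw [smul_smul, div_abs_mul t (xs n f) (hne0 n hn)]
    rw [← Finset.sum_congr rfl heq]
    simpa using habel
  set g : X := ∑ n ∈ B, (t * sgn (xs n f)) • x n with hgdef
  have hcoefg : ∀ k, xs k g = if k ∈ B then t * sgn (xs k f) else 0 := fun k =>
    coef_eq x xs hb _ B k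
  have hgnorm : ‖g‖ ≤ 2 * C₀ * ‖f‖ := hstep1
  -- greedy projections of g onto sign-subsets of B
  have habs : ∀ k, |xs k g| = if k ∈ B then t else 0 := by
    intro k
    rw [hcoefg k]
    split
    · rw [abs_mul, abs_sgn, mul_one, abs_of_nonneg ht]
    · exact abs_zero
  have hsub : ∀ B' ⊆ B, GreedySet (fun n => xs n g) B' := by
    intro B' hB' n hn k hk
    dsimp only
    have h1 : |xs n g| = t := by rw [habs n, if_pos (hB' hn)]
    have h2 : |xs k g| ≤ t := by
      rw [habs k]; split
      · exact le_rfl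
      · exact ht
    rw [h1]; exact h2
  -- positive part
  set Bp : Finset ℕ := B.filter (fun n => 0 ≤ xs n f) with hBp
  set Bm : Finset ℕ := B.filter (fun n => ¬ (0 ≤ xs n f)) with hBm
  have hsgnp : ∀ n ∈ Bp, sgn (xs n f) = 1 := by
    intro n hn
    rw [hBp, Finset.mem_filter] at hn
    have hpos : 0 < xs n f := lt_of_le_of_ne hn.2 (Ne.symm (hne0 n hn.1))
    unfold sgn
    rw [if_neg (hne0 n hn.1), abs_of_pos hpos, div_self (hne0 n hn.1)]
  have hsgnm : ∀ n ∈ Bm, sgn (xs n f) = -1 := by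
    intro n hn
    rw [hBm, Finset.mem_filter] at hn
    have hneg : xs n f < 0 := lt_of_not_ge hn.2
    unfold sgn
    rw [if_neg hneg.ne, abs_of_neg hneg, div_neg, div_self hneg.ne]
  have hprojp : ‖t • ∑ n ∈ Bp, x n‖ ≤ C₀ * ‖g‖ := by
    have := hq g Bp (hsub Bp (Finset.filter_subset _ _))
    have heq : ∑ n ∈ Bp, xs n g • x n = t • ∑ n ∈ Bp, x n := by
      rw [Finset.smul_sum]
      refine Finset.sum_congr rfl fun n hn => ?_
      rw [hcoefg n, if_pos (Finset.filter_subset _ _ hn), hsgnp n hn, mul_one]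
    rwa [heq] at this
  have hprojm : ‖t • ∑ n ∈ Bm, x n‖ ≤ C₀ * ‖g‖ := by
    have := hq g Bm (hsub Bm (Finset.filter_subset _ _))
    have heq : ∑ n ∈ Bm, xs n g • x n = -(t • ∑ n ∈ Bm, x n) := by
      rw [Finset.smul_sum, ← Finset.sum_neg_distrib]
      refine Finset.sum_congr rfl fun n hn => ?_
      rw [hcoefg n, if_pos (Finset.filter_subset _ _ hn), hsgnm n hn]
      simp
    rw [heq, norm_neg] at this
    exact this
  have hsplit : t • ∑ n ∈ B, x n = t • ∑ n ∈ Bp, x n + t • ∑ n ∈ Bm, x n := by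
    rw [← smul_add, ← Finset.sum_filter_add_sum_filter_not B (fun n => 0 ≤ xs n f)]
  have : t * ‖∑ n ∈ B, x n‖ = ‖t • ∑ n ∈ B, x n‖ := by
    rw [norm_smul, Real.norm_eq_abs, abs_of_nonneg ht]
  rw [this, hsplit]
  calc ‖t • ∑ n ∈ Bp, x n + t • ∑ n ∈ Bm, x n‖
      ≤ ‖t • ∑ n ∈ Bp, x n‖ + ‖t • ∑ n ∈ Bm, x n‖ := norm_add_le _ _
    _ ≤ C₀ * ‖g‖ + C₀ * ‖g‖ := add_le_add hprojp hprojm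
    _ ≤ 4 * C₀^2 * ‖f‖ := by nlinarith [hgnorm, norm_nonneg g, norm_nonneg f]

/-- Sign comparison: signed sums with unimodular signs are dominated by the plain sum. -/
lemma sign_compare (hb : ∀ m n, xs m (x n) = if m = n then (1:ℝ) else 0)
    (C₀ : ℝ) (hC₀ : 1 ≤ C₀)
    (hq : ∀ (f : X) (A : Finset ℕ), GreedySet (fun n => xs n f) A →
      ‖∑ n ∈ A, xs n f • x n‖ ≤ C₀ * ‖f‖)
    (A : Finset ℕ) (ε : ℕ → ℝ) (hε : ∀ k, ε k = 1 ∨ ε k = -1) :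
    ‖∑ n ∈ A, ε n • x n‖ ≤ (2 * C₀ + 1) * ‖∑ n ∈ A, x n‖ := by
  set g : X := ∑ n ∈ A, x n with hg
  have hg' : g = ∑ n ∈ A, (1:ℝ) • x n := by simp [hg]
  have hcoefg : ∀ k, xs k g = if k ∈ A then (1:ℝ) else 0 := by
    intro k
    rw [hg']
    exact coef_eq x xs hb _ A k
  set Ap : Finset ℕ := A.filter (fun n => ε n = 1) with hAp
  have hgrp : GreedySet (fun n => xs n g) Ap := by
    intro n hn k hk
    dsimp only
    have h1 : |xs n g| = 1 := by
      rw [hcoefg n, if_pos (Finset.filter_subset _ _ hn)]; simp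
    rw [h1, hcoefg k]
    split <;> simp
  have hproj : ‖∑ n ∈ Ap, x n‖ ≤ C₀ * ‖g‖ := by
    have := hq g Ap hgrp
    have heq : ∑ n ∈ Ap, xs n g • x n = ∑ n ∈ Ap, x n := by
      refine Finset.sum_congr rfl fun n hn => ?_
      rw [hcoefg n, if_pos (Finset.filter_subset _ _ hn), one_smul]
    rwa [heq] at this
  have hid : ∑ n ∈ A, ε n • x n = 2 • (∑ n ∈ Ap, x n) - g := by
    rw [hg']
    rw [← Finset.sum_filter_add_sum_filter_not A (fun n => ε n = 1) (fun n => ε n • x n)]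
    rw [← Finset.sum_filter_add_sum_filter_not A (fun n => ε n = 1) (fun n => (1:ℝ) • x n)]
    have e1 : ∑ n ∈ A.filter (fun n => ε n = 1), ε n • x n = ∑ n ∈ Ap, x n := by
      refine Finset.sum_congr rfl fun n hn => ?_
      rw [Finset.mem_filter] at hn
      rw [hn.2, one_smul]
    have e2 : ∑ n ∈ A.filter (fun n => ¬ ε n = 1), ε n • x n
        = -∑ n ∈ A.filter (fun n => ¬ ε n = 1), (1:ℝ) • x n := by
      rw [← Finset.sum_neg_distrib]
      refine Finset.sum_congr rfl fun n hn => ?_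
      rw [Finset.mem_filter] at hn
      rcases hε n with h | h
      · exact absurd h hn.2
      · rw [h]; simp
    rw [e1, e2]
    have : ∑ n ∈ A.filter (fun n => ε n = 1), (1:ℝ) • x n = ∑ n ∈ Ap, x n := by
      refine Finset.sum_congr rfl fun n hn => one_smul ℝ (x n)
    rw [this]
    abel
  rw [hid]
  have h2 : ‖(2:ℕ) • (∑ n ∈ Ap, x n) - g‖ ≤ 2 * ‖∑ n ∈ Ap, x n‖ + ‖g‖ := by
    refine (norm_sub_le _ _).trans ?_
    rw [two_nsmul]
    have := norm_add_le (∑ n ∈ Ap, x n) (∑ n ∈ Ap, x n)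
    linarith
  refine h2.trans ?_
  linarith [hproj]

/-- Coefficients are eventually small. -/
lemma coef_small (hb : ∀ m n, xs m (x n) = if m = n then (1:ℝ) else 0)
    (hdense : ∀ f : X, ∀ ε > 0, ∃ (A : Finset ℕ) (c : ℕ → ℝ), ‖f - ∑ n ∈ A, c n • x n‖ < ε)
    (bb : ℝ) (hbb : ∀ n, ‖xs n‖ ≤ bb)
    (f : X) (t : ℝ) (ht : 0 < t) :
    ∃ A₀ : Finset ℕ, ∀ k ∉ A₀, |xs k f| < t := by
  have hbb0 : 0 ≤ bb := le_trans (norm_nonneg _) (hbb 0)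
  have hden : 0 < bb + 1 := by linarith
  obtain ⟨A₀, c, hA₀⟩ := hdense f (t / (bb + 1)) (by positivity)
  refine ⟨A₀, fun k hk => ?_⟩
  have hcoef : xs k (∑ n ∈ A₀, c n • x n) = 0 := by
    rw [coef_eq x xs hb c A₀ k, if_neg hk]
  have : xs k f = xs k (f - ∑ n ∈ A₀, c n • x n) := by
    rw [map_sub, hcoef, sub_zero]
  rw [this]
  calc |xs k (f - ∑ n ∈ A₀, c n • x n)|
      ≤ ‖xs k‖ * ‖f - ∑ n ∈ A₀, c n • x n‖ := (xs k).le_opNorm _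
    _ ≤ bb * ‖f - ∑ n ∈ A₀, c n • x n‖ :=
        mul_le_mul_of_nonneg_right (hbb k) (norm_nonneg _)
    _ < t := by
        have hlt : ‖f - ∑ n ∈ A₀, c n • x n‖ < t / (bb + 1) := hA₀
        have h1 : bb * ‖f - ∑ n ∈ A₀, c n • x n‖ ≤ (bb + 1) * ‖f - ∑ n ∈ A₀, c n • x n‖ :=
          mul_le_mul_of_nonneg_right (by linarith) (norm_nonneg _)
        have h2 : (bb + 1) * ‖f - ∑ n ∈ A₀, c n • x n‖ < (bb + 1) * (t / (bb + 1)) :=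
          mul_lt_mul_of_pos_left hlt hden
        rw [mul_div_cancel₀ _ hden.ne'] at h2
        linarith

/-- Weighted sum-of-squares bound from a min-coefficient decay property. -/
lemma sumsq (g : ℕ → ℝ) (hg : ∀ k, 0 ≤ g k) (M : ℝ) (hM : 0 ≤ M) (w : ℕ → ℝ)
    (hw : ∀ j, 1 ≤ j → 0 < w j)
    (hmin : ∀ A : Finset ℕ, A.Nonempty → ∀ k ∈ A, (∀ j ∈ A, g k ≤ g j) →
      g k * w A.card ≤ M) :
    ∀ (m : ℕ) (A : Finset ℕ), A.card = m →
      ∑ k ∈ A, (g k)^2 ≤ M^2 * ∑ j ∈ Finset.Icc 1 m, ((w j)⁻¹)^2 := by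
  intro m
  induction m with
  | zero =>
    intro A hA
    have : A = ∅ := Finset.card_eq_zero.mp hA
    subst this
    simp
  | succ m ih =>
    intro A hA
    have hne : A.Nonempty := Finset.card_pos.mp (by omega)
    obtain ⟨k₀, hk₀A, hk₀min⟩ := Finset.exists_min_image A g hne
    have hwpos : 0 < w (m + 1) := hw (m + 1) (by omega)
    have hd : g k₀ * w (m + 1) ≤ M := by
      have := hmin A hne k₀ hk₀A hk₀min
      rwa [hA] at this
    have hsq : (g k₀)^2 ≤ M^2 * ((w (m+1))⁻¹)^2 := by
      have h1 : g k₀ ≤ M * (w (m+1))⁻¹ := by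
        rw [← div_eq_mul_inv, le_div_iff₀ hwpos]
        exact hd
      have h2 : 0 ≤ M * (w (m+1))⁻¹ := by positivity
      calc (g k₀)^2 ≤ (M * (w (m+1))⁻¹)^2 := by
            exact pow_le_pow_left₀ (hg k₀) h1 2
        _ = M^2 * ((w (m+1))⁻¹)^2 := by ring
    have hcard' : (A.erase k₀).card = m := by
      rw [Finset.card_erase_of_mem hk₀A, hA]
      omega
    have hIH := ih (A.erase k₀) hcard'
    have hsum : ∑ k ∈ A, (g k)^2 = (g k₀)^2 + ∑ k ∈ A.erase k₀, (g k)^2 :=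
      (Finset.add_sum_erase A (fun k => (g k)^2) hk₀A).symm
    have hIcc : ∑ j ∈ Finset.Icc 1 (m+1), ((w j)⁻¹)^2
        = ∑ j ∈ Finset.Icc 1 m, ((w j)⁻¹)^2 + ((w (m+1))⁻¹)^2 := by
      rw [← Finset.sum_Icc_succ_top (by omega : 1 ≤ m + 1)]
    rw [hsum, hIcc, mul_add]
    linarith

/-- One bootstrapping round: improve a lower democracy bound using the GT property. -/
lemma round_lemma (hb : ∀ m n, xs m (x n) = if m = n then (1:ℝ) else 0)
    (hdense : ∀ f : X, ∀ ε > 0, ∃ (A : Finset ℕ) (c : ℕ → ℝ), ‖f - ∑ n ∈ A, c n • x n‖ < ε)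
    (bb : ℝ) (hbb : ∀ n, ‖xs n‖ ≤ bb)
    (C₀ : ℝ) (hC₀ : 1 ≤ C₀)
    (hq : ∀ (f : X) (A : Finset ℕ), GreedySet (fun n => xs n f) A →
      ‖∑ n ∈ A, xs n f • x n‖ ≤ C₀ * ‖f‖)
    (D : ℝ) (hD : 1 ≤ D)
    (hGT : ∀ T : X →L[ℝ] lp (fun _ : ℕ => ℝ) 2, ∀ (B : Finset ℕ) (f : ℕ → X),
      ∃ ε : ℕ → ℝ, (∀ k, ε k = 1 ∨ ε k = -1) ∧
        ∑ k ∈ B, ‖T (f k)‖ ≤ D * ‖T‖ * ‖∑ k ∈ B, ε k • f k‖)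
    (c : ℝ) (hc : 0 < c) (p q : ℕ → ℝ)
    (hp1 : ∀ j, 1 ≤ j → 0 < p j) (hpmono : ∀ i j : ℕ, i ≤ j → p i ≤ p j)
    (hlow : ∀ A : Finset ℕ, A.Nonempty → c * p A.card ≤ ‖∑ n ∈ A, x n‖)
    (hqpos : ∀ m, 1 ≤ m → 0 < q m)
    (hsum : ∀ m, 1 ≤ m → ∑ j ∈ Finset.Icc 1 m, ((p j)⁻¹)^2 ≤ (q m)^2) :
    ∀ A : Finset ℕ, A.Nonempty →
      (c / (4 * D * C₀^2 * (2*C₀+1))) * ((A.card : ℝ) / q A.card) ≤ ‖∑ n ∈ A, x n‖ := by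
  intro A hA
  set m := A.card with hmdef
  have hm : 1 ≤ m := Finset.card_pos.mpr hA
  have hqm := hqpos m hm
  have hC₀pos : (0:ℝ) < C₀ := lt_of_lt_of_le one_pos hC₀
  have hDpos : (0:ℝ) < D := lt_of_lt_of_le one_pos hD
  -- the operator into ℓ²
  set T : X →L[ℝ] lp (fun _ : ℕ => ℝ) 2 :=
    ∑ k ∈ A, (xs k).smulRight (lp.single 2 k (1:ℝ)) with hTdef
  have hTapp : ∀ f : X, T f = ∑ k ∈ A, lp.single 2 k (xs k f) := by
    intro f
    rw [hTdef, ContinuousLinearMap.sum_apply]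
    refine Finset.sum_congr rfl fun k _ => ?_
    rw [ContinuousLinearMap.smulRight_apply, ← lp.single_smul, smul_eq_mul, mul_one]
  have h2R : (0:ℝ) < (2 : ℝ≥0∞).toReal := by norm_num
  have hTnormsq : ∀ f : X, ‖T f‖^2 = ∑ k ∈ A, (xs k f)^2 := by
    intro f
    rw [hTapp f]
    have := lp.norm_sum_single (E := fun _ : ℕ => ℝ) h2R (fun k => xs k f) A
    simpa [Real.norm_eq_abs, sq_abs] using this
  have hsingle0 : ∀ k : ℕ, lp.single (E := fun _ : ℕ => ℝ) 2 k (0:ℝ) = 0 := by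
    intro k
    have := lp.single_smul (E := fun _ : ℕ => ℝ) 2 k (1:ℝ) (0:ℝ)
    simpa using this
  have hTx : ∀ j ∈ A, ‖T (x j)‖ = 1 := by
    intro j hj
    rw [hTapp]
    have hsum1 : ∑ k ∈ A, lp.single (E := fun _ : ℕ => ℝ) 2 k (xs k (x j))
        = lp.single 2 j (1:ℝ) := by
      rw [Finset.sum_eq_single j]
      · rw [hb j j, if_pos rfl]
      · intro k _ hkj
        rw [hb k j, if_neg hkj]
        exact hsingle0 k
      · intro h; exact absurd hj h
    rw [hsum1]
    have := lp.norm_single (E := fun _ : ℕ => ℝ) (p := 2) (by norm_num) j (1:ℝ)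
    simpa using this
  -- norm bound on T via sumsq
  set R := (4 * C₀^2 / c) * q m with hRdef
  have hRpos : 0 < R := by positivity
  have hTle : ‖T‖ ≤ R := by
    refine ContinuousLinearMap.opNorm_le_bound T (by positivity) fun f => ?_
    have hM : (0:ℝ) ≤ 4 * C₀^2 * ‖f‖ := by positivity
    have hmin : ∀ A' : Finset ℕ, A'.Nonempty → ∀ k ∈ A',
        (∀ j ∈ A', |xs k f| ≤ |xs j f|) →
        |xs k f| * (c * p A'.card) ≤ 4 * C₀^2 * ‖f‖ := by
      intro A' hA' k hk hkmin
      rcases eq_or_lt_of_le (abs_nonneg (xs k f)) with h0 | hpos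
      · rw [← h0, zero_mul]; exact hM
      · obtain ⟨A₀, hA₀⟩ := coef_small x xs hb hdense bb hbb f |xs k f| hpos
        set B := (A₀ ∪ A').filter (fun n => |xs k f| ≤ |xs n f|) with hBdef
        have hsubB : A' ⊆ B := fun j hj =>
          Finset.mem_filter.mpr ⟨Finset.mem_union_right _ hj, hkmin j hj⟩
        have hgrB : GreedySet (fun n => xs n f) B := by
          intro n hn k' hk'
          dsimp only
          have hn' := (Finset.mem_filter.mp hn).2
          by_cases hk'' : k' ∈ A₀ ∪ A'
          · have hnle : ¬ |xs k f| ≤ |xs k' f| := fun hle =>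
              hk' (Finset.mem_filter.mpr ⟨hk'', hle⟩)
            push_neg at hnle
            linarith
          · have := hA₀ k' (fun hmem => hk'' (Finset.mem_union_left _ hmem))
            linarith
        have hkey := key_ineq x xs hb C₀ hC₀ hq f B |xs k f| (abs_nonneg _)
          (fun n hn => (Finset.mem_filter.mp hn).2) hgrB
        have hBne : B.Nonempty := ⟨k, hsubB hk⟩
        have hlowB := hlow B hBne
        have hcardle : A'.card ≤ B.card := Finset.card_le_card hsubB
        have hp' : c * p A'.card ≤ c * p B.card :=
          mul_le_mul_of_nonneg_left (hpmono _ _ hcardle) hc.le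
        calc |xs k f| * (c * p A'.card)
            ≤ |xs k f| * ‖∑ n ∈ B, x n‖ :=
              mul_le_mul_of_nonneg_left (hp'.trans hlowB) (abs_nonneg _)
          _ ≤ 4 * C₀^2 * ‖f‖ := hkey
    have hsumsq := sumsq (fun k => |xs k f|) (fun k => abs_nonneg _)
      (4 * C₀^2 * ‖f‖) hM (fun j => c * p j)
      (fun j hj => mul_pos hc (hp1 j hj)) hmin m A rfl
    have hsq : ‖T f‖^2 ≤ (R * ‖f‖)^2 := by
      rw [hTnormsq f]
      have e1 : ∑ k ∈ A, (xs k f)^2 = ∑ k ∈ A, |xs k f|^2 := by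
        refine Finset.sum_congr rfl fun k _ => (sq_abs _).symm
      have e2 : ∑ j ∈ Finset.Icc 1 m, (((c * p j))⁻¹)^2
          = (c⁻¹)^2 * ∑ j ∈ Finset.Icc 1 m, ((p j)⁻¹)^2 := by
        rw [Finset.mul_sum]
        refine Finset.sum_congr rfl fun j _ => ?_
        rw [mul_inv]
        ring
      have e3 : (c⁻¹)^2 * ∑ j ∈ Finset.Icc 1 m, ((p j)⁻¹)^2
          ≤ (c⁻¹)^2 * (q m)^2 :=
        mul_le_mul_of_nonneg_left (hsum m hm) (by positivity)
      have e4 : (4 * C₀^2 * ‖f‖)^2 * ((c⁻¹)^2 * (q m)^2) = (R * ‖f‖)^2 := by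
        rw [hRdef]
        field_simp
      calc ∑ k ∈ A, (xs k f)^2 = ∑ k ∈ A, |xs k f|^2 := e1
        _ ≤ (4 * C₀^2 * ‖f‖)^2 * ∑ j ∈ Finset.Icc 1 m, (((c * p j))⁻¹)^2 := hsumsq
        _ ≤ (4 * C₀^2 * ‖f‖)^2 * ((c⁻¹)^2 * (q m)^2) := by
            rw [e2]
            exact mul_le_mul_of_nonneg_left e3 (by positivity)
        _ = (R * ‖f‖)^2 := e4
    nlinarith [norm_nonneg (T f), norm_nonneg f, mul_nonneg hRpos.le (norm_nonneg f), hsq]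
  -- GT application
  obtain ⟨ε, hεpm, hεineq⟩ := hGT T A x
  have hsumTx : ∑ k ∈ A, ‖T (x k)‖ = (m:ℝ) := by
    rw [Finset.sum_congr rfl (fun k hk => hTx k hk), Finset.sum_const, nsmul_eq_mul, mul_one]
  have hsigns := sign_compare x xs hb C₀ hC₀ hq A ε hεpm
  set N := ‖∑ n ∈ A, x n‖ with hN
  have hN0 : 0 ≤ N := norm_nonneg _
  have key : (m:ℝ) ≤ D * R * ((2*C₀+1) * N) := by
    calc (m:ℝ) = ∑ k ∈ A, ‖T (x k)‖ := hsumTx.symm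
      _ ≤ D * ‖T‖ * ‖∑ k ∈ A, ε k • x k‖ := hεineq
      _ ≤ D * R * ((2*C₀+1) * N) := by
          have h1 : D * ‖T‖ ≤ D * R := mul_le_mul_of_nonneg_left hTle hDpos.le
          exact mul_le_mul h1 hsigns (norm_nonneg _) (by positivity)
  rw [div_mul_div_comm, div_le_iff₀ (by positivity)]
  have h3 : c * (m:ℝ) ≤ c * (D * R * ((2*C₀+1) * N)) :=
    mul_le_mul_of_nonneg_left key hc.le
  have hcR : c * R = 4 * C₀^2 * q m := by
    rw [hRdef]
    field_simp
  have h4 : c * (D * R * ((2*C₀+1) * N)) = N * (4 * D * C₀^2 * (2*C₀+1) * q m) := by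
    have : c * (D * R * ((2*C₀+1) * N)) = (c * R) * (D * ((2*C₀+1) * N)) := by ring
    rw [this, hcR]
    ring
  linarith
end Aux

lemma harmonic_le (m : ℕ) :
    ∑ j ∈ Finset.Icc 1 m, ((j:ℝ))⁻¹ ≤ 2 * Real.sqrt m := by
  induction m with
  | zero => simp
  | succ m ih =>
    rw [Finset.sum_Icc_succ_top (by omega : 1 ≤ m + 1)]
    set u := Real.sqrt m with hudef
    set v := Real.sqrt (m+1 : ℕ) with hvdef
    have hu0 : 0 ≤ u := Real.sqrt_nonneg _
    have hu2 : u^2 = (m:ℝ) := Real.sq_sqrt (by positivity)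
    have hv2 : v^2 = ((m+1 : ℕ):ℝ) := Real.sq_sqrt (by positivity)
    have hv1 : 1 ≤ v := by
      rw [hvdef]
      rw [show (1:ℝ) = Real.sqrt 1 from (Real.sqrt_one).symm]
      apply Real.sqrt_le_sqrt
      push_cast
      linarith
    have huv : u ≤ v := by
      apply Real.sqrt_le_sqrt
      push_cast
      linarith
    have hv0 : 0 < v := lt_of_lt_of_le one_pos hv1
    have h1 : (v-u)*(v+u) = 1 := by
      have : v^2 - u^2 = 1 := by
        rw [hu2, hv2]; push_cast; ring
      nlinarith [this]
    have h4 : (1:ℝ) ≤ 2 * (v - u) * v^2 := by nlinarith [h1, sub_nonneg.mpr huv, hv1, hu0]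
    have h5 : (((m+1 : ℕ)):ℝ)⁻¹ ≤ 2*(v-u) := by
      rw [← hv2, ← one_div, div_le_iff₀ (by positivity)]
      linarith
    linarith

lemma threehalves_le (m : ℕ) (hm : 1 ≤ m) :
    ∑ j ∈ Finset.Icc 1 m, 2 * Real.sqrt j / ((j:ℝ))^2 ≤ 6 - 4 / Real.sqrt m := by
  induction m, hm using Nat.le_induction with
  | base => norm_num
  | succ m hm ih =>
    rw [Finset.sum_Icc_succ_top (by omega : 1 ≤ m + 1)]
    set u := Real.sqrt m with hudef
    set v := Real.sqrt (m+1 : ℕ) with hvdef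
    have hu2 : u^2 = (m:ℝ) := Real.sq_sqrt (by positivity)
    have hv2 : v^2 = ((m+1 : ℕ):ℝ) := Real.sq_sqrt (by positivity)
    have hu1 : 1 ≤ u := by
      rw [hudef, show (1:ℝ) = Real.sqrt 1 from (Real.sqrt_one).symm]
      apply Real.sqrt_le_sqrt
      push_cast
      exact_mod_cast Nat.one_le_cast.mpr hm
    have huv : u ≤ v := by
      apply Real.sqrt_le_sqrt
      push_cast
      linarith
    have hu0 : 0 < u := lt_of_lt_of_le one_pos hu1
    have hv0 : 0 < v := lt_of_lt_of_le hu0 huv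
    have hsq : v^2 - u^2 = 1 := by rw [hu2, hv2]; push_cast; ring
    have hpoly : 2*u + 4*u*v^2 ≤ 4*v^3 := by
      nlinarith [hsq, sub_nonneg.mpr huv, hu0.le, hv0.le,
        mul_le_mul_of_nonneg_right huv hv0.le, mul_le_mul_of_nonneg_right huv hu0.le]
    have e : 4/u - 4/v - 2*v/(((m+1:ℕ)):ℝ)^2
        = (4*v^3 - 4*u*v^2 - 2*u) / (u*v^3) := by
      rw [← hv2]
      field_simp
    have hnum : 0 ≤ 4*v^3 - 4*u*v^2 - 2*u := by linarith
    have hden : 0 < u*v^3 := by positivity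
    have hkey : 2*v/(((m+1:ℕ)):ℝ)^2 ≤ 4/u - 4/v := by
      have := div_nonneg hnum hden.le
      linarith [e ▸ this]
    have : 2 * Real.sqrt (m+1 : ℕ) / (((m+1:ℕ)):ℝ)^2 = 2*v/(((m+1:ℕ)):ℝ)^2 := by
      rw [hvdef]
    rw [this]
    linarith

lemma p1_eq (j : ℕ) : ((j:ℝ))/Real.sqrt j = Real.sqrt j := by
  rcases Nat.eq_zero_or_pos j with rfl | hj
  · simp
  · have h : (0:ℝ) < Real.sqrt j := Real.sqrt_pos.mpr (by positivity)
    rw [div_eq_iff h.ne']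
    exact (Real.mul_self_sqrt (by positivity)).symm

lemma p2_eq (j : ℕ) : ((j:ℝ))/Real.sqrt (2*Real.sqrt j)
    = (Real.sqrt (Real.sqrt j))^3 / Real.sqrt 2 := by
  set u := Real.sqrt (Real.sqrt (j:ℝ)) with hu
  have hu0 : 0 ≤ u := Real.sqrt_nonneg _
  have hu2 : u^2 = Real.sqrt j := Real.sq_sqrt (Real.sqrt_nonneg _)
  have hu4 : u^4 = (j:ℝ) := by
    rw [show u^4 = (u^2)^2 by ring, hu2, Real.sq_sqrt (by positivity)]
  have hs : Real.sqrt (2*Real.sqrt j) = Real.sqrt 2 * u := by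
    rw [Real.sqrt_mul (by norm_num)]
  rcases Nat.eq_zero_or_pos j with rfl | hj
  · simp [hu]
  · have hju : (0:ℝ) < (j:ℝ) := by positivity
    have hupos : 0 < u := by
      rw [hu]
      apply Real.sqrt_pos.mpr
      exact Real.sqrt_pos.mpr hju
    rw [hs, ← hu4]
    rw [show u^4 = (u^3)*u by ring]
    rw [mul_comm (Real.sqrt 2) u, ← div_div, mul_div_assoc, div_self hupos.ne', mul_one]

lemma sqrt2_pos : (0:ℝ) < Real.sqrt 2 := Real.sqrt_pos.mpr (by norm_num)

lemma p2_mono (i j : ℕ) (hij : i ≤ j) :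
    ((i:ℝ))/Real.sqrt (2*Real.sqrt i) ≤ ((j:ℝ))/Real.sqrt (2*Real.sqrt j) := by
  rw [p2_eq, p2_eq]
  have h1 : Real.sqrt (Real.sqrt i) ≤ Real.sqrt (Real.sqrt j) :=
    Real.sqrt_le_sqrt (Real.sqrt_le_sqrt (by exact_mod_cast Nat.cast_le.mpr hij))
  exact (div_le_div_iff_of_pos_right sqrt2_pos).mpr (pow_le_pow_left₀ (Real.sqrt_nonneg _) h1 3)

lemma p2_pos (j : ℕ) (hj : 1 ≤ j) : 0 < ((j:ℝ))/Real.sqrt (2*Real.sqrt j) := by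
  have hj0 : (0:ℝ) < (j:ℝ) := by exact_mod_cast hj
  have : 0 < Real.sqrt (2*Real.sqrt j) := Real.sqrt_pos.mpr (by
    have : 0 < Real.sqrt j := Real.sqrt_pos.mpr hj0
    linarith)
  positivity

lemma p2_inv_sq (j : ℕ) (hj : 1 ≤ j) :
    ((((j:ℝ))/Real.sqrt (2*Real.sqrt j))⁻¹)^2 = 2 * Real.sqrt j / ((j:ℝ))^2 := by
  have hj0 : (0:ℝ) < (j:ℝ) := by exact_mod_cast hj
  have hs0 : (0:ℝ) ≤ 2*Real.sqrt j := by positivity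
  rw [inv_div, div_pow, Real.sq_sqrt hs0]

lemma p1_inv_sq (j : ℕ) (hj : 1 ≤ j) :
    ((((j:ℝ))/Real.sqrt j)⁻¹)^2 = ((j:ℝ))⁻¹ := by
  have hj0 : (0:ℝ) < (j:ℝ) := by exact_mod_cast hj
  rw [p1_eq, ← Real.sqrt_inv, Real.sq_sqrt (by positivity)]


/-- Quasi-greedy bases of GT spaces are democratic, with both democracy
functions of order `m`. -/
theorem stmt12 {X : Type*} [NormedAddCommGroup X] [NormedSpace ℝ X] [CompleteSpace X]
    (hGT : IsGTSpace X) (x : ℕ → X) (xs : ℕ → X →L[ℝ] ℝ)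
    (hbasis : IsXBasis x xs) (hqg : QuasiGreedyX x xs) :
    (∃ D ≥ (1 : ℝ), ∀ A B : Finset ℕ, A.card = B.card →
        ‖∑ n ∈ A, x n‖ ≤ D * ‖∑ n ∈ B, x n‖) ∧
      ∃ c C : ℝ, 0 < c ∧ c ≤ C ∧
        (∀ m : ℕ, 1 ≤ m → ∀ A : Finset ℕ, m ≤ A.card → c * (m : ℝ) ≤ ‖∑ n ∈ A, x n‖) ∧
        (∀ m : ℕ, 1 ≤ m → ∀ A : Finset ℕ, A.card ≤ m → ‖∑ n ∈ A, x n‖ ≤ C * (m : ℝ)) := by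
  classical
  obtain ⟨C₀, hC₀, hq⟩ := hqg
  obtain ⟨D₀, hGT₀⟩ := hGT
  have hD1 : (1:ℝ) ≤ max D₀ 1 := le_max_right _ _
  set D : ℝ := max D₀ 1 with hDdef
  have hGT' : ∀ T : X →L[ℝ] lp (fun _ : ℕ => ℝ) 2, ∀ (B : Finset ℕ) (f : ℕ → X),
      ∃ ε : ℕ → ℝ, (∀ k, ε k = 1 ∨ ε k = -1) ∧
        ∑ k ∈ B, ‖T (f k)‖ ≤ D * ‖T‖ * ‖∑ k ∈ B, ε k • f k‖ := by
    intro T B f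
    obtain ⟨ε, h1, h2⟩ := hGT₀ T B f
    refine ⟨ε, h1, h2.trans ?_⟩
    apply mul_le_mul_of_nonneg_right ?_ (norm_nonneg _)
    exact mul_le_mul_of_nonneg_right (le_max_left _ _) (norm_nonneg _)
  have hb := hbasis.biorth
  have hdense := hbasis.dense
  obtain ⟨bb₀, hbb₀⟩ := hbasis.dual_ub
  set bb : ℝ := max bb₀ 1 with hbbdef
  have hbb : ∀ n, ‖xs n‖ ≤ bb := fun n => (hbb₀ n).trans (le_max_left _ _)
  have hbb1 : (1:ℝ) ≤ bb := le_max_right _ _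
  have hbbpos : (0:ℝ) < bb := by linarith
  have hC₀pos : (0:ℝ) < C₀ := by linarith
  have hDpos : (0:ℝ) < D := by linarith
  have hKpos : (0:ℝ) < 4 * D * C₀^2 * (2*C₀+1) := by positivity
  -- initial trivial lower bound
  have hlow0 : ∀ A : Finset ℕ, A.Nonempty → (1/bb) * (1:ℝ) ≤ ‖∑ n ∈ A, x n‖ := by
    intro A hA
    obtain ⟨n, hn⟩ := hA
    have hxsum : ∑ k ∈ A, x k = ∑ k ∈ A, (1:ℝ) • x k := by simp
    have h1 : xs n (∑ k ∈ A, x k) = 1 := by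
      rw [hxsum, coef_eq x xs hb (fun _ => (1:ℝ)) A n, if_pos hn]
    have h2 : (1:ℝ) ≤ bb * ‖∑ k ∈ A, x k‖ := by
      calc (1:ℝ) = |xs n (∑ k ∈ A, x k)| := by rw [h1]; simp
        _ ≤ ‖xs n‖ * ‖∑ k ∈ A, x k‖ := (xs n).le_opNorm _
        _ ≤ bb * ‖∑ k ∈ A, x k‖ := mul_le_mul_of_nonneg_right (hbb n) (norm_nonneg _)
    rw [mul_one, div_le_iff₀ hbbpos]
    linarith
  -- round 1
  have round1 := round_lemma x xs hb hdense bb hbb C₀ hC₀ hq D hD1 hGT'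
    (1/bb) (by positivity) (fun _ => (1:ℝ)) (fun m : ℕ => Real.sqrt m)
    (fun j _ => one_pos) (fun i j _ => le_rfl)
    (fun A hA => hlow0 A hA)
    (fun m hm => Real.sqrt_pos.mpr (by exact_mod_cast hm))
    (fun m hm => by
      rw [Real.sq_sqrt (by positivity : (0:ℝ) ≤ (m:ℝ))]
      simp [Nat.card_Icc])
  -- round 2
  have round2 := round_lemma x xs hb hdense bb hbb C₀ hC₀ hq D hD1 hGT'
    ((1/bb) / (4 * D * C₀^2 * (2*C₀+1))) (by positivity)
    (fun j : ℕ => (j:ℝ)/Real.sqrt j) (fun m : ℕ => Real.sqrt (2*Real.sqrt m))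
    (fun j hj => by
      show (0:ℝ) < (j:ℝ)/Real.sqrt j
      rw [p1_eq]
      exact Real.sqrt_pos.mpr (by exact_mod_cast hj))
    (fun i j hij => by
      show (i:ℝ)/Real.sqrt i ≤ (j:ℝ)/Real.sqrt j
      rw [p1_eq, p1_eq]
      exact Real.sqrt_le_sqrt (by exact_mod_cast hij))
    (fun A hA => round1 A hA)
    (fun m hm => Real.sqrt_pos.mpr (by
      have : (0:ℝ) < Real.sqrt m := Real.sqrt_pos.mpr (by exact_mod_cast hm)
      linarith))
    (fun m hm => by
      show ∑ j ∈ Finset.Icc 1 m, ((((j:ℝ))/Real.sqrt j)⁻¹)^2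
          ≤ (Real.sqrt (2*Real.sqrt m))^2
      rw [Real.sq_sqrt (by positivity : (0:ℝ) ≤ 2*Real.sqrt m)]
      have he : ∑ j ∈ Finset.Icc 1 m, ((((j:ℝ))/Real.sqrt j)⁻¹)^2
          = ∑ j ∈ Finset.Icc 1 m, ((j:ℝ))⁻¹ := by
        refine Finset.sum_congr rfl fun j hj => ?_
        exact p1_inv_sq j (Finset.mem_Icc.mp hj).1
      rw [he]
      exact harmonic_le m)
  -- round 3
  have round3 := round_lemma x xs hb hdense bb hbb C₀ hC₀ hq D hD1 hGT'
    ((1/bb) / (4 * D * C₀^2 * (2*C₀+1)) / (4 * D * C₀^2 * (2*C₀+1))) (by positivity)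
    (fun j : ℕ => (j:ℝ)/Real.sqrt (2*Real.sqrt j)) (fun _ : ℕ => Real.sqrt 6)
    (fun j hj => p2_pos j hj)
    (fun i j hij => p2_mono i j hij)
    (fun A hA => round2 A hA)
    (fun m _ => Real.sqrt_pos.mpr (by norm_num))
    (fun m hm => by
      show ∑ j ∈ Finset.Icc 1 m, ((((j:ℝ))/Real.sqrt (2*Real.sqrt j))⁻¹)^2
          ≤ (Real.sqrt 6)^2
      rw [Real.sq_sqrt (by norm_num : (0:ℝ) ≤ 6)]
      have he : ∑ j ∈ Finset.Icc 1 m, ((((j:ℝ))/Real.sqrt (2*Real.sqrt j))⁻¹)^2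
          = ∑ j ∈ Finset.Icc 1 m, 2 * Real.sqrt j / ((j:ℝ))^2 := by
        refine Finset.sum_congr rfl fun j hj => ?_
        exact p2_inv_sq j (Finset.mem_Icc.mp hj).1
      rw [he]
      have h1 := threehalves_le m hm
      have h2 : 0 < Real.sqrt m := Real.sqrt_pos.mpr (by exact_mod_cast hm)
      have h3 : 0 < 4 / Real.sqrt m := by positivity
      linarith)
  obtain ⟨cl, hclpos, hlower⟩ : ∃ cl : ℝ, 0 < cl ∧
      ∀ A : Finset ℕ, A.Nonempty → cl * (A.card:ℝ) ≤ ‖∑ n ∈ A, x n‖ := by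
    have hsqrt6 : (0:ℝ) < Real.sqrt 6 := Real.sqrt_pos.mpr (by norm_num)
    refine ⟨((1/bb) / (4 * D * C₀^2 * (2*C₀+1)) / (4 * D * C₀^2 * (2*C₀+1))
      / (4 * D * C₀^2 * (2*C₀+1))) / Real.sqrt 6, by positivity, ?_⟩
    intro A hA
    have h := round3 A hA
    have e : ((1/bb) / (4 * D * C₀^2 * (2*C₀+1)) / (4 * D * C₀^2 * (2*C₀+1))
        / (4 * D * C₀^2 * (2*C₀+1))) / Real.sqrt 6 * (A.card:ℝ)
        = ((1/bb) / (4 * D * C₀^2 * (2*C₀+1)) / (4 * D * C₀^2 * (2*C₀+1))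
          / (4 * D * C₀^2 * (2*C₀+1))) * ((A.card:ℝ) / Real.sqrt 6) := by
      ring
    rw [e]
    exact h
  -- upper bound
  obtain ⟨Cx, hCx⟩ := hbasis.norm_ub
  have hCx0 : 0 ≤ Cx := le_trans (norm_nonneg _) (hCx 0)
  have hupper : ∀ A : Finset ℕ, ‖∑ n ∈ A, x n‖ ≤ Cx * A.card := by
    intro A
    calc ‖∑ n ∈ A, x n‖ ≤ ∑ n ∈ A, ‖x n‖ := norm_sum_le _ _
      _ ≤ ∑ _n ∈ A, Cx := Finset.sum_le_sum (fun n _ => hCx n)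
      _ = Cx * A.card := by rw [Finset.sum_const, nsmul_eq_mul, mul_comm]
  set CC : ℝ := max Cx cl with hCCdef
  have hCCcl : cl ≤ CC := le_max_right _ _
  have hCC0 : 0 < CC := lt_of_lt_of_le hclpos hCCcl
  have hupper' : ∀ A : Finset ℕ, ‖∑ n ∈ A, x n‖ ≤ CC * A.card := by
    intro A
    refine (hupper A).trans ?_
    exact mul_le_mul_of_nonneg_right (le_max_left _ _) (Nat.cast_nonneg _)
  constructor
  · -- democracy
    refine ⟨max (CC/cl) 1, le_max_right _ _, ?_⟩
    intro A B hcard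
    rcases Finset.eq_empty_or_nonempty A with rfl | hAne
    · simp only [Finset.sum_empty, norm_zero]
      have h0 : (0:ℝ) ≤ max (CC/cl) 1 := le_trans zero_le_one (le_max_right _ _)
      exact mul_nonneg h0 (norm_nonneg _)
    · have hBne : B.Nonempty := by
        rw [← Finset.card_pos, ← hcard]
        exact Finset.card_pos.mpr hAne
      have h1 : ‖∑ n ∈ A, x n‖ ≤ CC * A.card := hupper' A
      have h2 : cl * B.card ≤ ‖∑ n ∈ B, x n‖ := hlower B hBne
      have hcards : (A.card : ℝ) = (B.card : ℝ) := by exact_mod_cast hcard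
      have h3 : ‖∑ n ∈ A, x n‖ ≤ (CC/cl) * ‖∑ n ∈ B, x n‖ := by
        have e : CC * (A.card:ℝ) = (CC/cl) * (cl * B.card) := by
          rw [hcards]
          field_simp
        calc ‖∑ n ∈ A, x n‖ ≤ CC * A.card := h1
          _ = (CC/cl) * (cl * B.card) := e
          _ ≤ (CC/cl) * ‖∑ n ∈ B, x n‖ :=
              mul_le_mul_of_nonneg_left h2 (div_nonneg hCC0.le hclpos.le)
      refine h3.trans ?_
      exact mul_le_mul_of_nonneg_right (le_max_left _ _) (norm_nonneg _)
  · refine ⟨cl, CC, hclpos, hCCcl, ?_, ?_⟩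
    · intro m hm A hA
      have hAne : A.Nonempty := Finset.card_pos.mp (by omega)
      have h := hlower A hAne
      have hcast : (m:ℝ) ≤ (A.card:ℝ) := by exact_mod_cast hA
      calc cl * (m:ℝ) ≤ cl * (A.card:ℝ) := mul_le_mul_of_nonneg_left hcast hclpos.le
        _ ≤ ‖∑ n ∈ A, x n‖ := h
    · intro m hm A hA
      have hcast : (A.card:ℝ) ≤ (m:ℝ) := by exact_mod_cast hA
      calc ‖∑ n ∈ A, x n‖ ≤ CC * A.card := hupper' A
        _ ≤ CC * m := mul_le_mul_of_nonneg_left hcast hCC0.le
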